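/- Let Λ ⊂ Λ̃ be free abelian groups with a symmetric bilinear form on Λ̃, and suppose Λ̃ = Λ ⊕ ℤ·e where ⟨e,e⟩ = -1 and ⟨e, x⟩ = 0 for all x ∈ Λ (the blow-up of the Néron–Severi lattice). For a ∈ Λ, an integer 0 ≤ k < r, and the class ã = π*a + k·e ∈ Λ̃ (where π* is the inclusion), one has m_Λ̃(r, ã) ≤ m_Λ(r, a) + k(r-k), where m is defined by m(r,c) = r · inf { -∑_{i=1}^r Q(c/r - ν_i) : ν_i in the lattice, ∑ ν_i = c }. -/

import Mathlib

open scoped BigOperators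

noncomputable def mval {V : Type*} [AddCommGroup V] [Module ℚ V]
    (B : V →ₗ[ℚ] V →ₗ[ℚ] ℚ) (Λ : AddSubgroup V) (r : ℕ) (a : V) : ℝ :=
  (r : ℝ) * sInf { x : ℝ | ∃ μ : Fin r → V, (∀ i, μ i ∈ Λ) ∧ (∑ i, μ i) = a ∧
      x = -∑ i, ((B ((r : ℚ)⁻¹ • a - μ i)) ((r : ℚ)⁻¹ • a - μ i) : ℝ) }

/-- The blow-up of the lattice: the form on `V × ℚ` given by
`⟨(x,s),(y,t)⟩ = ⟨x,y⟩ - s·t`, i.e. the orthogonal sum with a `(-1)`-line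
spanned by the exceptional class `e = (0,1)`. -/
noncomputable def blowupForm {V : Type*} [AddCommGroup V] [Module ℚ V]
    (B : V →ₗ[ℚ] V →ₗ[ℚ] ℚ) : (V × ℚ) →ₗ[ℚ] (V × ℚ) →ₗ[ℚ] ℚ :=
  LinearMap.mk₂ ℚ (fun p q => B p.1 q.1 - p.2 * q.2)
    (by intro p p' q; simp [map_add, LinearMap.add_apply]; ring)
    (by intro c p q; simp [map_smul, LinearMap.smul_apply, smul_eq_mul]; ring)
    (by intro p q q'; simp [map_add]; ring)
    (by intro c p q; simp [map_smul, smul_eq_mul]; ring)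

/-- The blow-up of the Néron–Severi lattice: `Λ̃ = Λ ⊕ ℤ·e` with `e = (0,1)`. -/
noncomputable def blowupLattice {V : Type*} [AddCommGroup V] [Module ℚ V]
    (Λ : AddSubgroup V) : AddSubgroup (V × ℚ) :=
  Λ.prod (AddSubgroup.zmultiples (1 : ℚ))

/-- Blow-up inequality: `m_Λ̃(r, π*a + k·e) ≤ m_Λ(r, a) + k(r-k)` for `0 ≤ k < r`. -/
theorem mval_blowup_le {V : Type*} [AddCommGroup V] [Module ℚ V]
    (B : V →ₗ[ℚ] V →ₗ[ℚ] ℚ) (hsymm : ∀ x y, B x y = B y x)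
    (hneg : ∀ x, B x x ≤ 0)
    (Λ : AddSubgroup V) (hfg : Λ.FG)
    (r k : ℕ) (hr : 0 < r) (hk : k < r) (a : V) (ha : a ∈ Λ) :
    mval (blowupForm B) (blowupLattice Λ) r (a, (k : ℚ)) ≤
      mval B Λ r a + (k : ℝ) * ((r : ℝ) - (k : ℝ)) := by
  classical
  have hq0 : (r : ℚ) ≠ 0 := by exact_mod_cast hr.ne'
  have hr0 : (r : ℝ) ≠ 0 := by exact_mod_cast hr.ne'
  set S : Set ℝ := { x : ℝ | ∃ μ : Fin r → V, (∀ i, μ i ∈ Λ) ∧ (∑ i, μ i) = a ∧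
      x = -∑ i, ((B ((r : ℚ)⁻¹ • a - μ i)) ((r : ℚ)⁻¹ • a - μ i) : ℝ) } with hS
  set T : Set ℝ := { x : ℝ | ∃ μ : Fin r → (V × ℚ), (∀ i, μ i ∈ blowupLattice Λ) ∧
      (∑ i, μ i) = (a, (k : ℚ)) ∧
      x = -∑ i, ((blowupForm B ((r : ℚ)⁻¹ • (a, (k : ℚ)) - μ i))
          ((r : ℚ)⁻¹ • (a, (k : ℚ)) - μ i) : ℝ) } with hT
  -- shift constant
  set c : ℝ := (k : ℝ) * ((r : ℝ) - (k : ℝ)) / (r : ℝ) with hc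
  -- S is nonempty
  have hSne : S.Nonempty := by
    refine ⟨_, fun i => if i = (⟨0, hr⟩ : Fin r) then a else 0, ?_, ?_, rfl⟩
    · intro i; by_cases h : i = (⟨0, hr⟩ : Fin r) <;> simp [h, ha, zero_mem]
    · simp
  -- lower bounds
  have hSbdd : BddBelow S := by
    refine ⟨0, fun x hx => ?_⟩
    obtain ⟨μ, -, -, rfl⟩ := hx
    have : ∀ i : Fin r, ((B ((r : ℚ)⁻¹ • a - μ i)) ((r : ℚ)⁻¹ • a - μ i) : ℝ) ≤ 0 := by
      intro i; exact_mod_cast hneg _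
    have := Finset.sum_nonpos (s := Finset.univ) (fun i _ => this i)
    linarith
  have hTbdd : BddBelow T := by
    refine ⟨0, fun x hx => ?_⟩
    obtain ⟨μ, -, -, rfl⟩ := hx
    have key : ∀ p : V × ℚ, (blowupForm B p) p ≤ 0 := by
      intro p
      have h1 := hneg p.1
      have h2 : (0:ℚ) ≤ p.2 * p.2 := mul_self_nonneg _
      simp only [blowupForm, LinearMap.mk₂_apply]
      linarith
    have : ∀ i : Fin r, ((blowupForm B ((r : ℚ)⁻¹ • (a, (k : ℚ)) - μ i))
        ((r : ℚ)⁻¹ • (a, (k : ℚ)) - μ i) : ℝ) ≤ 0 := by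
      intro i; exact_mod_cast key _
    have := Finset.sum_nonpos (s := Finset.univ) (fun i _ => this i)
    linarith
  -- main step: each x ∈ S gives x + c ∈ T
  have hmain : ∀ x ∈ S, sInf T ≤ x + c := by
    intro x hx
    obtain ⟨μ, hμΛ, hμsum, rfl⟩ := hx
    apply csInf_le hTbdd
    set ε : Fin r → ℚ := fun i => if (i : ℕ) < k then 1 else 0 with hε
    refine ⟨fun i => (μ i, ε i), ?_, ?_, ?_⟩
    · intro i
      refine ⟨hμΛ i, ?_⟩
      simp only [hε]
      split
      · exact AddSubgroup.mem_zmultiples 1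
      · exact zero_mem _
    · have hεsum : ∑ i, ε i = (k : ℚ) := by
        rw [hε, Fin.sum_univ_eq_sum_range (fun i => if i < k then (1:ℚ) else 0),
          ← Finset.sum_filter]
        have h : (Finset.range r).filter (· < k) = Finset.range k := by
          ext i; simp; omega
        simp [h]
      rw [Prod.ext_iff]
      constructor
      · rw [Prod.fst_sum]; simpa using hμsum
      · rw [Prod.snd_sum]; simpa using hεsum
    · -- value computation
      have hterm : ∀ i : Fin r,
          (blowupForm B ((r : ℚ)⁻¹ • ((a, (k : ℚ)) : V × ℚ) - (μ i, ε i)))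
            ((r : ℚ)⁻¹ • ((a, (k : ℚ)) : V × ℚ) - (μ i, ε i)) =
          (B ((r : ℚ)⁻¹ • a - μ i)) ((r : ℚ)⁻¹ • a - μ i)
            - ((r : ℚ)⁻¹ * k - ε i) * ((r : ℚ)⁻¹ * k - ε i) := by
        intro i
        simp [blowupForm, Prod.smul_def, smul_eq_mul]
      have hεsq : ∀ i : Fin r, ε i * ε i = ε i := by
        intro i; simp only [hε]; split <;> ring
      have hεsum : ∑ i, ε i = (k : ℚ) := by
        rw [hε, Fin.sum_univ_eq_sum_range (fun i => if i < k then (1:ℚ) else 0),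
          ← Finset.sum_filter]
        have h : (Finset.range r).filter (· < k) = Finset.range k := by
          ext i; simp; omega
        simp [h]
      have hsq : ∑ i : Fin r, ((r : ℚ)⁻¹ * k - ε i) * ((r : ℚ)⁻¹ * k - ε i)
          = (k : ℚ) * ((r : ℚ) - (k : ℚ)) / (r : ℚ) := by
        have expand : ∀ i : Fin r, ((r : ℚ)⁻¹ * k - ε i) * ((r : ℚ)⁻¹ * k - ε i)
            = ((r : ℚ)⁻¹ * k) * ((r : ℚ)⁻¹ * k) - (2 * ((r : ℚ)⁻¹ * k) - 1) * ε i := by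
          intro i
          linear_combination hεsq i
        rw [Finset.sum_congr rfl (fun i _ => expand i)]
        rw [Finset.sum_sub_distrib, Finset.sum_const, ← Finset.mul_sum, hεsum]
        simp only [Finset.card_univ, Fintype.card_fin, nsmul_eq_mul]
        field_simp
        ring
      have hQ : ∑ i : Fin r, (blowupForm B ((r : ℚ)⁻¹ • ((a, (k : ℚ)) : V × ℚ) - (μ i, ε i)))
            ((r : ℚ)⁻¹ • ((a, (k : ℚ)) : V × ℚ) - (μ i, ε i))
          = (∑ i : Fin r, (B ((r : ℚ)⁻¹ • a - μ i)) ((r : ℚ)⁻¹ • a - μ i))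
            - (k : ℚ) * ((r : ℚ) - (k : ℚ)) / (r : ℚ) := by
        rw [Finset.sum_congr rfl (fun i _ => hterm i), Finset.sum_sub_distrib, hsq]
      have hQR := congrArg (Rat.cast : ℚ → ℝ) hQ
      push_cast at hQR
      rw [hc]
      push_cast
      linarith [hQR]
  -- conclude
  have h1 : sInf T ≤ sInf S + c := by
    have : sInf T - c ≤ sInf S := le_csInf hSne (fun x hx => by linarith [hmain x hx])
    linarith
  unfold mval
  calc (r : ℝ) * sInf T ≤ (r : ℝ) * (sInf S + c) := by
        apply mul_le_mul_of_nonneg_left h1 (by positivity)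
    _ = (r : ℝ) * sInf S + (k : ℝ) * ((r : ℝ) - (k : ℝ)) := by
        rw [hc]; field_simp
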